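/- In misère Partizan Kayles, if the total number of squares in a position G is divisible by 3, then Right wins G when Right moves first (equivalently, Left moving second loses), so o⁻(G) ∈ {R, N}. -/
import Mathlib


/-- Add a strip of length `k` to a position (strips of length 0 are discarded). -/
def addStrip (m : Multiset ℕ) (k : ℕ) : Multiset ℕ := if k = 0 then m else k ::ₘ m

/-- Left removes one square from a strip of length `n ≥ 1`, leaving strips `i` and `n-1-i`. -/
def LeftMove (G G' : Multiset ℕ) : Prop :=
  ∃ n ∈ G, ∃ i, i + 1 ≤ n ∧ G' = addStrip (addStrip (G.erase n) i) (n - 1 - i)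

/-- Right removes two adjacent squares from a strip of length `n ≥ 2`, leaving `i` and `n-2-i`. -/
def RightMove (G G' : Multiset ℕ) : Prop :=
  ∃ n ∈ G, ∃ i, i + 2 ≤ n ∧ G' = addStrip (addStrip (G.erase n) i) (n - 2 - i)

mutual
  /-- Misère play: Left, to move, wins (a player unable to move wins). -/
  inductive LeftWinsMover : Multiset ℕ → Prop
    | cannot (G : Multiset ℕ) : (¬ ∃ G', LeftMove G G') → LeftWinsMover G
    | move (G G' : Multiset ℕ) : LeftMove G G' → LeftWinsWaiter G' → LeftWinsMover G
  /-- Misère play: Left wins with Right to move. -/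
  inductive LeftWinsWaiter : Multiset ℕ → Prop
    | intro (G : Multiset ℕ) : (∃ G', RightMove G G') →
        (∀ G', RightMove G G' → LeftWinsMover G') → LeftWinsWaiter G
end

inductive Outcome | L | N | P | R
  deriving DecidableEq

open Classical in
/-- The misère outcome `o⁻(G)`. -/
noncomputable def outcome (G : Multiset ℕ) : Outcome :=
  if LeftWinsMover G then (if LeftWinsWaiter G then Outcome.L else Outcome.N)
  else (if LeftWinsWaiter G then Outcome.P else Outcome.R)

/-- The partial order on outcomes: `L` greatest, `R` least, `N` and `P` incomparable. -/
def Outcome.le (a b : Outcome) : Prop := a = b ∨ a = Outcome.R ∨ b = Outcome.L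

/-- `pos k j` is the position `kS₁ + jS₂`. -/
def pos (k j : ℕ) : Multiset ℕ := Multiset.replicate k 1 + Multiset.replicate j 2


lemma sum_addStrip (m : Multiset ℕ) (k : ℕ) : (addStrip m k).sum = m.sum + k := by
  unfold addStrip; split <;> simp [*] <;> omega

lemma zero_not_mem_addStrip {m : Multiset ℕ} (h : 0 ∉ m) (k : ℕ) : 0 ∉ addStrip m k := by
  unfold addStrip; split
  · exact h
  · intro hm
    rcases Multiset.mem_cons.1 hm with h1 | h1
    · omega
    · exact h h1

lemma sum_rightMove {G G' : Multiset ℕ} (h0 : 0 ∉ G) (h : RightMove G G') :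
    0 ∉ G' ∧ G'.sum + 2 = G.sum := by
  obtain ⟨n, hn, i, hi, rfl⟩ := h
  have h0e : 0 ∉ G.erase n := fun hc => h0 (Multiset.mem_of_mem_erase hc)
  have hsum : (G.erase n).sum + n = G.sum := by
    conv_rhs => rw [← Multiset.cons_erase hn]
    simp [Multiset.sum_cons]; omega
  refine ⟨zero_not_mem_addStrip (zero_not_mem_addStrip h0e i) _, ?_⟩
  rw [sum_addStrip, sum_addStrip]; omega

lemma sum_leftMove {G G' : Multiset ℕ} (h0 : 0 ∉ G) (h : LeftMove G G') :
    0 ∉ G' ∧ G'.sum + 1 = G.sum := by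
  obtain ⟨n, hn, i, hi, rfl⟩ := h
  have h0e : 0 ∉ G.erase n := fun hc => h0 (Multiset.mem_of_mem_erase hc)
  have hsum : (G.erase n).sum + n = G.sum := by
    conv_rhs => rw [← Multiset.cons_erase hn]
    simp [Multiset.sum_cons]; omega
  refine ⟨zero_not_mem_addStrip (zero_not_mem_addStrip h0e i) _, ?_⟩
  rw [sum_addStrip, sum_addStrip]; omega

lemma not_LWW_of_mod (s : ℕ) : ∀ G : Multiset ℕ, G.sum = s → 0 ∉ G → G.sum % 3 = 0 →
    ¬ LeftWinsWaiter G := by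
  induction s using Nat.strong_induction_on with
  | _ s ih =>
    intro G hs h0 h3 hW
    rcases hW with ⟨_, ⟨G1, hR⟩, hall⟩
    obtain ⟨h01, hsum1⟩ := sum_rightMove h0 hR
    have hmod1 : G1.sum % 3 = 1 := by omega
    have hM1 : LeftWinsMover G1 := hall G1 hR
    cases hM1 with
    | cannot _ hno =>
        apply hno
        have hne : G1 ≠ 0 := by
          intro hc; rw [hc] at hmod1; simp at hmod1
        obtain ⟨m, hm⟩ := Multiset.exists_mem_of_ne_zero hne
        have hm1 : 1 ≤ m := by
          rcases Nat.eq_zero_or_pos m with h | h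
          · exact absurd (h ▸ hm) h01
          · exact h
        exact ⟨_, m, hm, 0, by omega, rfl⟩
    | move _ G2 hL hW2 =>
        obtain ⟨h02, hsum2⟩ := sum_leftMove h01 hL
        exact ih G2.sum (by omega) G2 rfl h02 (by omega) hW2

theorem kayles_sum_zero_mod_three (G : Multiset ℕ) (hG : 0 ∉ G)
    (h : G.sum % 3 = 0) :
    ¬ LeftWinsWaiter G ∧ (outcome G = Outcome.R ∨ outcome G = Outcome.N) := by
  have hnW : ¬ LeftWinsWaiter G := not_LWW_of_mod G.sum G rfl hG h
  refine ⟨hnW, ?_⟩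
  by_cases hM : LeftWinsMover G
  · right; simp [outcome, hM, hnW]
  · left; simp [outcome, hM, hnW]
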